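/- Let n be an odd positive integer and let Γ be the semidirect product (ZMod n) ⋊ (ZMod 4) with respect to the homomorphism ZMod 4 → Aut(ZMod n) sending the generator 1 to the inversion automorphism x ↦ -x. Then there exists an injective group homomorphism from Γ into the special unitary group SU(2) = Matrix.specialUnitaryGroup (Fin 2) ℂ. -/

import Mathlib

open Multiplicative

noncomputable section SU2EmbedAux

namespace SU2Embed

open Matrix Complex

instance instGroupSU2 : Group (Matrix.specialUnitaryGroup (Fin 2) ℂ) :=
  { (inferInstance : Monoid (Matrix.specialUnitaryGroup (Fin 2) ℂ)) with
    inv := fun A => ⟨star A.1, by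
      obtain ⟨h1, h2⟩ := Matrix.mem_specialUnitaryGroup_iff.mp A.2
      refine Matrix.mem_specialUnitaryGroup_iff.mpr ⟨Unitary.star_mem h1, ?_⟩
      rw [Matrix.star_eq_conjTranspose, Matrix.det_conjTranspose, h2, star_one]⟩
    inv_mul_cancel := fun A => Subtype.ext
      (Matrix.mem_unitaryGroup_iff'.mp (Matrix.mem_specialUnitaryGroup_iff.mp A.2).1) }

local notation "SU2" => Matrix.specialUnitaryGroup (Fin 2) ℂ

lemma inv_val (A : SU2) : ((A⁻¹ : SU2) : Matrix (Fin 2) (Fin 2) ℂ) = star (A : Matrix (Fin 2) (Fin 2) ℂ) := rfl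

lemma star_fin_two (a b c d : ℂ) :
    star !![a,b;c,d] = !![star a, star c; star b, star d] := by
  ext i j
  rw [Matrix.star_eq_conjTranspose]
  fin_cases i <;> fin_cases j <;> simp [conjTranspose_apply]

lemma pow_fin_two_diag (z w : ℂ) (k : ℕ) : (!![z,0;0,w])^k = !![z^k,0;0,w^k] := by
  induction k with
  | zero => simp [Matrix.one_fin_two]
  | succ k ih => rw [pow_succ, pow_succ, pow_succ, ih, Matrix.mul_fin_two]; ring_nf

lemma dmem (z : ℂ) (hz : z * star z = 1) : !![z, 0; 0, star z] ∈ SU2 := by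
  rw [Matrix.mem_specialUnitaryGroup_iff]
  constructor
  · rw [Matrix.mem_unitaryGroup_iff, star_fin_two, Matrix.mul_fin_two, Matrix.one_fin_two]
    have hz' : (starRingEnd ℂ) z * z = 1 := by rw [mul_comm]; exact hz
    have hz'' : z * (starRingEnd ℂ) z = 1 := hz
    simp [hz', hz'']
  · rw [Matrix.det_fin_two_of]; simpa using hz

lemma jmem : !![(0:ℂ), 1; -1, 0] ∈ SU2 := by
  rw [Matrix.mem_specialUnitaryGroup_iff]
  constructor
  · rw [Matrix.mem_unitaryGroup_iff, star_fin_two, Matrix.mul_fin_two, Matrix.one_fin_two]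
    norm_num
  · rw [Matrix.det_fin_two_of]; norm_num

/-- the diagonal element of `SU(2)` -/
def da (z : ℂ) (hz : z * star z = 1) : SU2 := ⟨_, dmem z hz⟩

/-- the rotation `j` element of `SU(2)` -/
def jb : SU2 := ⟨_, jmem⟩

lemma da_pow_val (z : ℂ) (hz : z * star z = 1) (k : ℕ) :
    (((da z hz)^k : SU2) : Matrix (Fin 2) (Fin 2) ℂ) = !![z^k, 0; 0, (star z)^k] := by
  rw [SubmonoidClass.coe_pow]
  exact pow_fin_two_diag z (star z) k

lemma jb_pow_val (k : ℕ) :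
    ((jb^k : SU2) : Matrix (Fin 2) (Fin 2) ℂ) = (!![(0:ℂ), 1; -1, 0])^k := by
  rw [SubmonoidClass.coe_pow]; rfl

lemma jb_conj (z : ℂ) (hz : z * star z = 1) : jb * da z hz * jb⁻¹ = (da z hz)⁻¹ := by
  apply Subtype.ext
  show (!![(0:ℂ),1;-1,0] * !![z,0;0,star z]) * star !![(0:ℂ),1;-1,0] = star !![z,0;0,star z]
  rw [star_fin_two, star_fin_two, Matrix.mul_fin_two, Matrix.mul_fin_two]
  norm_num

lemma jb_pow4 : (jb : SU2)^4 = 1 := by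
  apply Subtype.ext
  rw [jb_pow_val]
  show (!![(0:ℂ),1;-1,0])^4 = (1 : Matrix (Fin 2) (Fin 2) ℂ)
  rw [show (4:ℕ) = 2+2 from rfl, pow_add, pow_two, Matrix.mul_fin_two, Matrix.mul_fin_two,
    Matrix.one_fin_two]
  norm_num

end SU2Embed

end SU2EmbedAux

open SU2Embed

/-- Let `n` be an odd positive integer and let `Γ` be the semidirect product
`(ZMod n) ⋊ (ZMod 4)` with respect to the homomorphism `ZMod 4 → Aut(ZMod n)` sending the
generator `1` to the inversion automorphism `x ↦ -x`. Then there exists an injective group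
homomorphism from `Γ` into `SU(2) = Matrix.specialUnitaryGroup (Fin 2) ℂ`. -/
theorem semidirect_product_embeds_in_SU2
    (n : ℕ) (hn : 0 < n) (hodd : Odd n)
    (φ : Multiplicative (ZMod 4) →* MulAut (Multiplicative (ZMod n)))
    (hφ : ∀ x : ZMod n, φ (ofAdd 1) (ofAdd x) = ofAdd (-x)) :
    ∃ f : (Multiplicative (ZMod n) ⋊[φ] Multiplicative (ZMod 4)) →*
        Matrix.specialUnitaryGroup (Fin 2) ℂ,
      Function.Injective f := by
  haveI : NeZero n := ⟨hn.ne'⟩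
  set ζ : ℂ := Complex.exp (2 * Real.pi * Complex.I / n) with hζdef
  have hprim : IsPrimitiveRoot ζ n := Complex.isPrimitiveRoot_exp n hn.ne'
  have hζn : ζ ^ n = 1 := hprim.pow_eq_one
  have hz : ζ * star ζ = 1 := by
    have h1 : ‖ζ‖ = 1 := hprim.norm'_eq_one hn.ne'
    rw [show (star ζ) = (starRingEnd ℂ) ζ from rfl, Complex.mul_conj, Complex.normSq_eq_norm_sq]
    rw [h1]
    norm_num
  set a : Matrix.specialUnitaryGroup (Fin 2) ℂ := da ζ hz with ha_def
  set b : Matrix.specialUnitaryGroup (Fin 2) ℂ := jb with hb_def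
  have ha_n : a ^ n = 1 := by
    apply Subtype.ext
    rw [ha_def, da_pow_val, hζn, ← star_pow, hζn]
    simp [Matrix.one_fin_two]
  have hb_4 : b ^ 4 = 1 := jb_pow4
  -- the two homomorphisms
  set α : Multiplicative (ZMod n) →* Matrix.specialUnitaryGroup (Fin 2) ℂ :=
    MonoidHom.mk' (fun m => a ^ (toAdd m).val) (by
      intro m₁ m₂
      show a ^ (toAdd m₁ + toAdd m₂).val = _
      rw [ZMod.val_add, ← pow_eq_pow_mod _ ha_n, pow_add]) with hα_def
  set β : Multiplicative (ZMod 4) →* Matrix.specialUnitaryGroup (Fin 2) ℂ :=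
    MonoidHom.mk' (fun g => b ^ (toAdd g).val) (by
      intro g₁ g₂
      show b ^ (toAdd g₁ + toAdd g₂).val = _
      rw [ZMod.val_add, ← pow_eq_pow_mod _ hb_4, pow_add]) with hβ_def
  -- basic conjugation facts
  have hbab : b * a * b⁻¹ = a⁻¹ := jb_conj ζ hz
  have hconj : ∀ j : ℤ, b * a ^ j * b⁻¹ = a ^ (-j) := by
    intro j
    have h1 : (MulAut.conj b) (a ^ j) = ((MulAut.conj b) a) ^ j := map_zpow _ _ _
    have h2 : (MulAut.conj b) a = a⁻¹ := by rw [MulAut.conj_apply]; exact hbab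
    calc b * a ^ j * b⁻¹ = (MulAut.conj b) (a ^ j) := by rw [MulAut.conj_apply]
      _ = (a⁻¹) ^ j := by rw [h1, h2]
      _ = a ^ (-j) := by rw [inv_zpow, zpow_neg]
  have hbv : ∀ (v : ℕ) (j : ℤ), b^v * a^j * (b^v)⁻¹ = a^((-1:ℤ)^v * j) := by
    intro v
    induction v with
    | zero => intro j; simp
    | succ v ih =>
      intro j
      have : b^(v+1) * a^j * (b^(v+1))⁻¹ = b * (b^v * a^j * (b^v)⁻¹) * b⁻¹ := by
        rw [pow_succ']
        group
      rw [this, ih j, hconj, pow_succ]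
      ring_nf
  have hφ1 : ∀ m : Multiplicative (ZMod n), φ (ofAdd 1) m = m⁻¹ := by
    intro m
    have := hφ (toAdd m)
    simpa using this
  have hφpow : ∀ (v : ℕ) (m : Multiplicative (ZMod n)),
      ((φ (ofAdd 1))^v) m = m ^ ((-1:ℤ)^v) := by
    intro v
    induction v with
    | zero => intro m; simp
    | succ v ih =>
      intro m
      rw [pow_succ, MulAut.mul_apply, hφ1, ih, pow_succ, inv_zpow']
      congr 1
      ring
  -- compatibility
  have hcompat : ∀ g, α.comp (φ g).toMonoidHom
      = (MulAut.conj (β g)).toMonoidHom.comp α := by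
    intro g
    apply MonoidHom.ext
    intro m
    set v := (toAdd g).val with hv_def
    have hg : g = (ofAdd (1 : ZMod 4))^v := by
      apply_fun toAdd using toAdd.injective
      show toAdd g = v • ((1 : ZMod 4))
      rw [nsmul_eq_mul, mul_one, hv_def, ZMod.natCast_val, ZMod.cast_id]
    have hβg : β g = b ^ v := rfl
    have hLHS : (φ g) m = m ^ ((-1:ℤ)^v) := by
      rw [hg, map_pow]
      exact hφpow v m
    show α ((φ g) m) = (MulAut.conj (β g)) (α m)
    rw [hLHS, MulAut.conj_apply, hβg]
    have hαm : α m = a ^ ((toAdd m).val) := rfl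
    have hαzpow : α (m ^ ((-1:ℤ)^v)) = (α m) ^ ((-1:ℤ)^v) := map_zpow α m _
    rw [hαzpow, hαm, ← zpow_natCast a ((toAdd m).val), hbv v, ← zpow_mul, mul_comm]
  refine ⟨SemidirectProduct.lift α β hcompat, ?_⟩
  rw [injective_iff_map_eq_one]
  intro p hp
  rw [← SemidirectProduct.inl_left_mul_inr_right p, map_mul,
    SemidirectProduct.lift_inl, SemidirectProduct.lift_inr] at hp
  -- extract matrix equation
  set k := (toAdd p.left).val with hk_def
  set v := (toAdd p.right).val with hv_def
  have hk_lt : k < n := ZMod.val_lt _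
  have hv_lt : v < 4 := ZMod.val_lt _
  have hmat : !![ζ^k, 0; 0, (star ζ)^k] * (!![(0:ℂ), 1; -1, 0])^v = 1 := by
    have := congrArg (Subtype.val) hp
    rw [Submonoid.coe_mul] at this
    rw [show (α p.left : Matrix (Fin 2) (Fin 2) ℂ) = !![ζ^k, 0; 0, (star ζ)^k] from
      da_pow_val ζ hz k] at this
    rw [show (β p.right : Matrix (Fin 2) (Fin 2) ℂ) = (!![(0:ℂ), 1; -1, 0])^v from
      jb_pow_val v] at this
    exact this
  have hζk_ne : ζ ^ k = 1 → k = 0 := by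
    intro h
    exact Nat.eq_zero_of_dvd_of_lt (hprim.dvd_of_pow_eq_one k h) hk_lt
  have hζ2k : ζ ^ k = -1 → False := by
    intro h
    have h2k : ζ ^ (k * 2) = 1 := by rw [pow_mul, h]; norm_num
    have hdvd : n ∣ k * 2 := hprim.dvd_of_pow_eq_one _ h2k
    have hdk : n ∣ k := (Nat.Coprime.dvd_of_dvd_mul_right hodd.coprime_two_right) hdvd
    have : k = 0 := Nat.eq_zero_of_dvd_of_lt hdk hk_lt
    rw [this, pow_zero] at h
    norm_num at h
  clear_value v
  interval_cases v
  · -- v = 0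
    rw [pow_zero, mul_one, Matrix.one_fin_two] at hmat
    have h00 : ζ ^ k = 1 := by
      have := congrFun (congrFun hmat 0) 0
      simpa using this
    have hk0 : k = 0 := hζk_ne h00
    have hl : p.left = 1 := by
      have : (toAdd p.left) = 0 := (ZMod.val_eq_zero _).mp (hk_def ▸ hk0)
      simpa using this
    have hr : p.right = 1 := by
      have : (toAdd p.right) = 0 := (ZMod.val_eq_zero _).mp hv_def.symm
      simpa using this
    rw [← SemidirectProduct.inl_left_mul_inr_right p, hl, hr]
    simp
  · -- v = 1
    rw [pow_one, Matrix.mul_fin_two, Matrix.one_fin_two] at hmat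
    have := congrFun (congrFun hmat 0) 0
    norm_num at this
  · -- v = 2
    have hJ2 : (!![(0:ℂ), 1; -1, 0])^2 = !![-1, 0; 0, -1] := by
      rw [pow_two, Matrix.mul_fin_two]; norm_num
    rw [hJ2, Matrix.mul_fin_two, Matrix.one_fin_two] at hmat
    have h00 : ζ ^ k * -1 + 0 * 0 = 1 := congrFun (congrFun hmat 0) 0
    exact (hζ2k (by linear_combination -h00)).elim
  · -- v = 3
    have hJ3 : (!![(0:ℂ), 1; -1, 0])^3 = !![0, -1; 1, 0] := by
      rw [show (3:ℕ) = 2+1 from rfl, pow_add, pow_one, pow_two, Matrix.mul_fin_two,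
        Matrix.mul_fin_two]
      norm_num
    rw [hJ3, Matrix.mul_fin_two, Matrix.one_fin_two] at hmat
    have := congrFun (congrFun hmat 0) 0
    norm_num at this
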